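/- Let K ≥ 2, let a, w ∈ ℝ^K (Euclidean space) with a ≠ 0, and let l ∈ ℝ with l² ≤ ‖a‖². Let P_E denote the orthogonal projection onto the hyperplane E = {x ∈ ℝ^K : ⟨a, x⟩ = 0} (the orthogonal complement of the span of a). Then for each choice of sign ±, the value ± l·⟨a, w⟩/‖a‖² + √(1 − l²/‖a‖²)·‖P_E w‖ is the maximum (attained supremum) of ± ⟨x, w⟩ over the set {x ∈ ℝ^K : ‖x‖ = 1 and ⟨a, x⟩ = l}. (Paper: Lemma lemma:maxScalarProduct, part a).) -/

import Mathlib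

private lemma core_max_scalar {K : ℕ} (hK : 2 ≤ K)
    (a w : EuclideanSpace ℝ (Fin K)) (ha : a ≠ 0)
    (l : ℝ) (hl : l ^ 2 ≤ ‖a‖ ^ 2) :
    IsGreatest ((fun x => (inner ℝ x w : ℝ)) ''
        {x : EuclideanSpace ℝ (Fin K) | ‖x‖ = 1 ∧ (inner ℝ a x : ℝ) = l})
      (l * (inner ℝ a w : ℝ) / ‖a‖ ^ 2 +
        Real.sqrt (1 - l ^ 2 / ‖a‖ ^ 2) *
          ‖(Submodule.orthogonalProjectionOnto ((ℝ ∙ a)ᗮ) w : EuclideanSpace ℝ (Fin K))‖) := by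
  have hna : ‖a‖ ≠ 0 := norm_ne_zero_iff.mpr ha
  have hna2 : (0:ℝ) < ‖a‖ ^ 2 := by positivity
  set c : ℝ := (inner ℝ a w : ℝ) / ‖a‖ ^ 2 with hc
  set pw : EuclideanSpace ℝ (Fin K) := w - c • a with hpw
  have hP : ((Submodule.orthogonalProjectionOnto ((ℝ ∙ a)ᗮ) w : EuclideanSpace ℝ (Fin K))) = pw := by
    simp only [Submodule.orthogonalProjectionOnto_orthogonal, Submodule.starProjection_singleton]
    simp [hpw, hc]
  have hapw : (inner ℝ a pw : ℝ) = 0 := by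
    rw [hpw, inner_sub_right, real_inner_smul_right, real_inner_self_eq_norm_sq, hc]
    field_simp
    ring
  set s := Real.sqrt (1 - l ^ 2 / ‖a‖ ^ 2) with hs
  have hs0 : (0:ℝ) ≤ 1 - l ^ 2 / ‖a‖ ^ 2 := by
    rw [sub_nonneg]; exact (div_le_one hna2).mpr hl
  have hs2 : s ^ 2 = 1 - l ^ 2 / ‖a‖ ^ 2 := Real.sq_sqrt hs0
  have hsnn : 0 ≤ s := Real.sqrt_nonneg _
  rw [hP]
  constructor
  · -- membership : construct maximizer
    obtain ⟨v, hv1, hv2, hv3⟩ :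
        ∃ v : EuclideanSpace ℝ (Fin K), ‖v‖ = 1 ∧ (inner ℝ a v : ℝ) = 0 ∧
          (inner ℝ v pw : ℝ) = ‖pw‖ := by
      by_cases hpw0 : pw = 0
      · have hbot : ((ℝ ∙ a)ᗮ : Submodule ℝ (EuclideanSpace ℝ (Fin K))) ≠ ⊥ := by
          intro hb
          have h1 : Module.finrank ℝ (ℝ ∙ a : Submodule ℝ (EuclideanSpace ℝ (Fin K)))
              + Module.finrank ℝ ((ℝ ∙ a : Submodule ℝ (EuclideanSpace ℝ (Fin K)))ᗮ) = K := by
            simpa using Submodule.finrank_add_finrank_orthogonal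
              (K := (ℝ ∙ a : Submodule ℝ (EuclideanSpace ℝ (Fin K))))
          rw [hb, finrank_span_singleton ha] at h1
          simp at h1
          omega
        obtain ⟨z, hz, hz0⟩ := Submodule.exists_mem_ne_zero_of_ne_bot hbot
        have hzn : ‖z‖ ≠ 0 := norm_ne_zero_iff.mpr hz0
        refine ⟨‖z‖⁻¹ • z, ?_, ?_, ?_⟩
        · rw [norm_smul]
          simp [hzn]
        · have haz : (inner ℝ a z : ℝ) = 0 := by
            have := Submodule.mem_orthogonal_singleton_iff_inner_right.mp hz
            simpa using this
          rw [real_inner_smul_right, haz, mul_zero]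
        · rw [hpw0, inner_zero_right, norm_zero]
      · have hpn : ‖pw‖ ≠ 0 := norm_ne_zero_iff.mpr hpw0
        refine ⟨‖pw‖⁻¹ • pw, ?_, ?_, ?_⟩
        · rw [norm_smul]
          simp [hpn]
        · rw [real_inner_smul_right, hapw, mul_zero]
        · rw [real_inner_smul_left, real_inner_self_eq_norm_sq, sq,
            inv_mul_cancel_left₀ hpn]
    have hva : (inner ℝ v a : ℝ) = 0 := by rw [real_inner_comm]; exact hv2
    refine ⟨(l / ‖a‖ ^ 2) • a + s • v, ⟨?_, ?_⟩, ?_⟩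
    · -- norm 1
      have hx2 : ‖(l / ‖a‖ ^ 2) • a + s • v‖ ^ 2 = 1 := by
        rw [norm_add_sq_real, real_inner_smul_left, real_inner_smul_right, hv2]
        rw [norm_smul, norm_smul, mul_pow, mul_pow]
        simp only [Real.norm_eq_abs, sq_abs, hv1]
        rw [hs2]
        field_simp
        ring
      calc ‖(l / ‖a‖ ^ 2) • a + s • v‖
          = Real.sqrt (‖(l / ‖a‖ ^ 2) • a + s • v‖ ^ 2) :=
            (Real.sqrt_sq (norm_nonneg _)).symm
        _ = 1 := by rw [hx2]; exact Real.sqrt_one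
    · -- inner a x = l
      rw [inner_add_right, real_inner_smul_right, real_inner_smul_right, hv2,
        real_inner_self_eq_norm_sq]
      field_simp
      ring
    · -- value
      show (inner ℝ ((l / ‖a‖ ^ 2) • a + s • v) w : ℝ) = _
      have hvw : (inner ℝ v w : ℝ) = ‖pw‖ := by
        have h1 : (inner ℝ v pw : ℝ) = (inner ℝ v w : ℝ) - c * (inner ℝ v a : ℝ) := by
          rw [hpw, inner_sub_right, real_inner_smul_right]
        rw [h1, hva, mul_zero, sub_zero] at hv3
        exact hv3
      rw [inner_add_left, real_inner_smul_left, real_inner_smul_left, hvw]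
      ring
  · -- upper bound
    rintro r ⟨x, ⟨hx1, hx2⟩, rfl⟩
    set px : EuclideanSpace ℝ (Fin K) := x - (l / ‖a‖ ^ 2) • a with hpx
    have hxa : (inner ℝ x a : ℝ) = l := by rw [real_inner_comm]; exact hx2
    have hxw : (inner ℝ x w : ℝ) = (inner ℝ x pw : ℝ) + c * l := by
      have h1 : (inner ℝ x pw : ℝ) = (inner ℝ x w : ℝ) - c * (inner ℝ x a : ℝ) := by
        rw [hpw, inner_sub_right, real_inner_smul_right]
      rw [h1, hxa]; ring
    have hxppw : (inner ℝ px pw : ℝ) = (inner ℝ x pw : ℝ) := by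
      rw [hpx, inner_sub_left, real_inner_smul_left, hapw]
      ring
    have hpxn2 : ‖px‖ ^ 2 = 1 - l ^ 2 / ‖a‖ ^ 2 := by
      rw [hpx, norm_sub_sq_real, real_inner_smul_right, hxa, norm_smul, mul_pow]
      simp only [Real.norm_eq_abs, sq_abs, hx1]
      field_simp
      ring
    have hpxn : ‖px‖ = s := by
      rw [← Real.sqrt_sq (norm_nonneg px), hpxn2, hs]
    have hle : (inner ℝ x pw : ℝ) ≤ s * ‖pw‖ := by
      calc (inner ℝ x pw : ℝ) = (inner ℝ px pw : ℝ) := hxppw.symm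
        _ ≤ ‖px‖ * ‖pw‖ := real_inner_le_norm px pw
        _ = s * ‖pw‖ := by rw [hpxn]
    show (inner ℝ x w : ℝ) ≤ _
    rw [hxw]
    have : c * l = l * (inner ℝ a w : ℝ) / ‖a‖ ^ 2 := by rw [hc]; ring
    linarith

/-- Lemma lemma:maxScalarProduct, part a). -/
theorem max_scalar_product_on_sphere_slice {K : ℕ} (hK : 2 ≤ K)
    (a w : EuclideanSpace ℝ (Fin K)) (ha : a ≠ 0)
    (l : ℝ) (hl : l ^ 2 ≤ ‖a‖ ^ 2) (e : ℝ) (he : e = 1 ∨ e = -1) :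
    IsGreatest ((fun x => e * (inner ℝ x w : ℝ)) ''
        {x : EuclideanSpace ℝ (Fin K) | ‖x‖ = 1 ∧ (inner ℝ a x : ℝ) = l})
      (e * (l * (inner ℝ a w : ℝ) / ‖a‖ ^ 2) +
        Real.sqrt (1 - l ^ 2 / ‖a‖ ^ 2) *
          ‖(Submodule.orthogonalProjectionOnto ((ℝ ∙ a)ᗮ) w : EuclideanSpace ℝ (Fin K))‖) := by
  rcases he with rfl | rfl
  · have h := core_max_scalar hK a w ha l hl
    simpa using h
  · have h := core_max_scalar hK a (-w) ha l hl
    simpa [inner_neg_right, mul_neg, neg_div, neg_one_mul, map_neg, norm_sub_rev]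
      using h
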